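/- Let 0 < p < 1, 0 < β < 1, σ > 0, μ > 0, and let B, Z₀, Z₁ be independent random variables on a probability space with P(B = 1) = p = 1 − P(B = 0), Z₀ ~ N(0, μ), Z₁ ~ N(0, σ² + μ). Put Q = Z₁ if B = 1 and Q = Z₀ if B = 0, and let τ′ = 2 · ((σ² + μ)/(σ²/μ)) · ln( β(1 − p) · √(σ²/μ + 1) / ((1 − β)p) ). Then for every measurable detector b̂ : ℝ → {0, 1}, E[ β · 1_{Q² > τ′, B = 0} + (1 − β) · 1_{Q² ≤ τ′, B = 1} ] ≤ E[ β · 1_{b̂(Q) = 1, B = 0} + (1 − β) · 1_{b̂(Q) = 0, B = 1} ]; that is, the threshold rule b̂*(q) = 1_{q² > τ′} minimizes the expected weighted-support error among all measurable detectors. -/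

import Mathlib

open MeasureTheory ProbabilityTheory Real

/-- **Bayes optimality of the weighted threshold rule (Corollary 3, equation (21)).**  In the
sparse Gaussian mixture model, the threshold rule `b̂*(q) = 1_{q² > τ′}` minimizes the expected
weighted-support error `E[β·1_{false positive} + (1 − β)·1_{false negative}]` among all
measurable `{0,1}`-valued detectors. -/
theorem weighted_threshold_rule_is_bayes_optimal
    {Ω : Type*} [MeasurableSpace Ω] (P : Measure Ω) [IsProbabilityMeasure P]
    (p β : ℝ) (hp : 0 < p) (hp1 : p < 1) (hβ : 0 < β) (hβ1 : β < 1)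
    (σ μ : NNReal) (hσ : 0 < σ) (hμ : 0 < μ)
    (B Z₀ Z₁ : Ω → ℝ) (hB : Measurable B) (hZ₀ : Measurable Z₀) (hZ₁ : Measurable Z₁)
    (hindep : iIndepFun ![B, Z₀, Z₁] P)
    (hB1 : P {ω | B ω = 1} = ENNReal.ofReal p)
    (hB0 : P {ω | B ω = 0} = ENNReal.ofReal (1 - p))
    (hZ₀law : Measure.map Z₀ P = gaussianReal 0 μ)
    (hZ₁law : Measure.map Z₁ P = gaussianReal 0 (σ ^ 2 + μ))
    (Q : Ω → ℝ) (hQ : Q = fun ω => if B ω = 1 then Z₁ ω else Z₀ ω)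
    (τ' : ℝ)
    (hτ' : τ' = 2 * (((σ:ℝ) ^ 2 + μ) / ((σ:ℝ) ^ 2 / μ))
        * Real.log (β * (1 - p) * Real.sqrt ((σ:ℝ) ^ 2 / μ + 1) / ((1 - β) * p)))
    (bhat : ℝ → ℝ) (hbhat : Measurable bhat)
    (hbhat01 : ∀ q, bhat q = 0 ∨ bhat q = 1) :
    ∫ ω, (β * (if τ' < Q ω ^ 2 ∧ B ω = 0 then 1 else 0)
        + (1 - β) * (if Q ω ^ 2 ≤ τ' ∧ B ω = 1 then 1 else 0)) ∂P
      ≤ ∫ ω, (β * (if bhat (Q ω) = 1 ∧ B ω = 0 then 1 else 0)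
        + (1 - β) * (if bhat (Q ω) = 0 ∧ B ω = 1 then 1 else 0)) ∂P := by
  classical
  -- real-valued parameters
  set v : NNReal := σ ^ 2 + μ with hvdef
  have hv : (0:NNReal) < v := lt_of_lt_of_le hμ le_add_self
  set μr : ℝ := (μ : ℝ) with hμrdef
  set σr : ℝ := (σ : ℝ) with hσrdef
  set vr : ℝ := (v : ℝ) with hvrdef
  have hμr : 0 < μr := hμ
  have hσr : 0 < σr := hσ
  have hvr : 0 < vr := hv
  have hvr' : vr = σr ^ 2 + μr := by rw [hvrdef, hvdef]; push_cast; ring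
  set f₀ : ℝ → ℝ := gaussianPDFReal 0 μ with hf₀def
  set f₁ : ℝ → ℝ := gaussianPDFReal 0 v with hf₁def
  -- the loss formula
  have key : ∀ S : Set ℝ, MeasurableSet S →
      ∫ ω, (β * (if Q ω ∈ S ∧ B ω = 0 then (1:ℝ) else 0)
        + (1 - β) * (if Q ω ∉ S ∧ B ω = 1 then (1:ℝ) else 0)) ∂P
      = β * ((1 - p) * ∫ x in S, f₀ x) + (1 - β) * (p * ∫ x in Sᶜ, f₁ x) := by
    intro S hS
    set A0 : Set Ω := Z₀ ⁻¹' S ∩ B ⁻¹' {0} with hA0def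
    set A1 : Set Ω := Z₁ ⁻¹' Sᶜ ∩ B ⁻¹' {1} with hA1def
    have hA0m : MeasurableSet A0 := (hZ₀ hS).inter (hB (measurableSet_singleton 0))
    have hA1m : MeasurableSet A1 := (hZ₁ hS.compl).inter (hB (measurableSet_singleton 1))
    have hmem0 : ∀ ω, (Q ω ∈ S ∧ B ω = 0) ↔ ω ∈ A0 := by
      intro ω
      simp only [hQ, hA0def, Set.mem_inter_iff, Set.mem_preimage, Set.mem_singleton_iff]
      constructor
      · rintro ⟨hq, hb⟩
        rw [if_neg (by rw [hb]; norm_num)] at hq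
        exact ⟨hq, hb⟩
      · rintro ⟨hq, hb⟩
        exact ⟨by rw [if_neg (by rw [hb]; norm_num)]; exact hq, hb⟩
    have hmem1 : ∀ ω, (Q ω ∉ S ∧ B ω = 1) ↔ ω ∈ A1 := by
      intro ω
      simp only [hQ, hA1def, Set.mem_inter_iff, Set.mem_preimage, Set.mem_compl_iff,
        Set.mem_singleton_iff]
      constructor
      · rintro ⟨hq, hb⟩
        rw [if_pos hb] at hq
        exact ⟨hq, hb⟩
      · rintro ⟨hq, hb⟩
        exact ⟨by rw [if_pos hb]; exact hq, hb⟩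
    have hint : ∫ ω, (β * (if Q ω ∈ S ∧ B ω = 0 then (1:ℝ) else 0)
        + (1 - β) * (if Q ω ∉ S ∧ B ω = 1 then (1:ℝ) else 0)) ∂P
        = ∫ ω, (β * (A0.indicator (fun _ => (1:ℝ)) ω)
          + (1 - β) * (A1.indicator (fun _ => (1:ℝ)) ω)) ∂P := by
      apply integral_congr_ae
      filter_upwards with ω
      rw [Set.indicator_apply, Set.indicator_apply, if_congr (hmem0 ω) rfl rfl,
        if_congr (hmem1 ω) rfl rfl]
    have hi0 : Integrable (fun ω => A0.indicator (fun _ => (1:ℝ)) ω) P :=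
      (integrable_const (1:ℝ)).indicator hA0m
    have hi1 : Integrable (fun ω => A1.indicator (fun _ => (1:ℝ)) ω) P :=
      (integrable_const (1:ℝ)).indicator hA1m
    rw [hint, integral_add (hi0.const_mul β) (hi1.const_mul (1 - β)),
      integral_const_mul, integral_const_mul, integral_indicator_const (1:ℝ) hA0m,
      integral_indicator_const (1:ℝ) hA1m]
    -- independence
    have hiZ₀B : IndepFun Z₀ B P := by
      have := hindep.indepFun (show (1:Fin 3) ≠ 0 by decide)
      simpa using this
    have hiZ₁B : IndepFun Z₁ B P := by
      have := hindep.indepFun (show (2:Fin 3) ≠ 0 by decide)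
      simpa using this
    have hPA0 : P A0 = ENNReal.ofReal (∫ x in S, f₀ x) * ENNReal.ofReal (1 - p) := by
      have e1 : P (Z₀ ⁻¹' S) = ENNReal.ofReal (∫ x in S, f₀ x) := by
        rw [← Measure.map_apply hZ₀ hS, hZ₀law, gaussianReal_apply_eq_integral 0 hμ.ne' S]
      have e2 : P (B ⁻¹' {0}) = ENNReal.ofReal (1 - p) := hB0
      rw [hA0def, hiZ₀B.measure_inter_preimage_eq_mul S {0} hS (measurableSet_singleton 0), e1, e2]
    have hPA1 : P A1 = ENNReal.ofReal (∫ x in Sᶜ, f₁ x) * ENNReal.ofReal p := by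
      have e1 : P (Z₁ ⁻¹' Sᶜ) = ENNReal.ofReal (∫ x in Sᶜ, f₁ x) := by
        rw [← Measure.map_apply hZ₁ hS.compl, hZ₁law, gaussianReal_apply_eq_integral 0 hv.ne' Sᶜ]
      have e2 : P (B ⁻¹' {1}) = ENNReal.ofReal p := hB1
      rw [hA1def, hiZ₁B.measure_inter_preimage_eq_mul Sᶜ {1} hS.compl (measurableSet_singleton 1), e1, e2]
    have h0n : 0 ≤ ∫ x in S, f₀ x := integral_nonneg fun x => gaussianPDFReal_nonneg _ _ _
    have h1n : 0 ≤ ∫ x in Sᶜ, f₁ x := integral_nonneg fun x => gaussianPDFReal_nonneg _ _ _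
    rw [measureReal_def, measureReal_def, hPA0, hPA1, ENNReal.toReal_mul, ENNReal.toReal_mul, ENNReal.toReal_ofReal h0n,
      ENNReal.toReal_ofReal h1n, ENNReal.toReal_ofReal (by linarith),
      ENNReal.toReal_ofReal hp.le]
    simp only [smul_eq_mul, mul_one]
    ring
  -- the two detector sets
  set Sstar : Set ℝ := {x | τ' < x ^ 2} with hSstardef
  set S : Set ℝ := bhat ⁻¹' {1} with hSdef
  have hSstarm : MeasurableSet Sstar :=
    measurableSet_lt measurable_const ((measurable_id.pow_const 2))
  have hSm : MeasurableSet S := hbhat (measurableSet_singleton 1)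
  -- rewrite the two goal integrals via key
  have eL : ∫ ω, (β * (if τ' < Q ω ^ 2 ∧ B ω = 0 then (1:ℝ) else 0)
        + (1 - β) * (if Q ω ^ 2 ≤ τ' ∧ B ω = 1 then (1:ℝ) else 0)) ∂P
      = β * ((1 - p) * ∫ x in Sstar, f₀ x) + (1 - β) * (p * ∫ x in Sstarᶜ, f₁ x) := by
    rw [← key Sstar hSstarm]
    apply integral_congr_ae
    filter_upwards with ω
    simp only [hSstardef, Set.mem_setOf_eq, not_lt]
  have eR : ∫ ω, (β * (if bhat (Q ω) = 1 ∧ B ω = 0 then (1:ℝ) else 0)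
        + (1 - β) * (if bhat (Q ω) = 0 ∧ B ω = 1 then (1:ℝ) else 0)) ∂P
      = β * ((1 - p) * ∫ x in S, f₀ x) + (1 - β) * (p * ∫ x in Sᶜ, f₁ x) := by
    rw [← key S hSm]
    apply integral_congr_ae
    filter_upwards with ω
    have hb0 : bhat (Q ω) = 0 ↔ ¬ bhat (Q ω) = 1 := by
      rcases hbhat01 (Q ω) with h | h <;> simp [h]
    simp only [hSdef, Set.mem_preimage, Set.mem_singleton_iff, hb0]
  rw [eL, eR]
  -- reduce to a comparison of integrals of g
  set a : ℝ := β * (1 - p) with hadef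
  set b : ℝ := (1 - β) * p with hbdef
  have ha : 0 < a := mul_pos hβ (by linarith)
  have hb' : 0 < b := mul_pos (by linarith) hp
  set g : ℝ → ℝ := fun x => a * f₀ x - b * f₁ x with hgdef
  have hf₀i : Integrable f₀ := integrable_gaussianPDFReal 0 μ
  have hf₁i : Integrable f₁ := integrable_gaussianPDFReal 0 v
  have hgi : Integrable g := ((hf₀i.const_mul a).sub (hf₁i.const_mul b))
  have hsplit : ∀ T : Set ℝ, MeasurableSet T →
      ∫ x in T, g x = (a * ∫ x in T, f₀ x) - b * ∫ x in T, f₁ x := by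
    intro T hT
    rw [hgdef]
    rw [integral_sub ((hf₀i.const_mul a).restrict) ((hf₁i.const_mul b).restrict),
      integral_const_mul, integral_const_mul]
  have hcompl : ∀ T : Set ℝ, MeasurableSet T →
      ∫ x in Tᶜ, f₁ x = (∫ x, f₁ x) - ∫ x in T, f₁ x := by
    intro T hT
    have := integral_add_compl hT hf₁i
    linarith
  -- pointwise characterization of the threshold set
  have hiff : ∀ x : ℝ, τ' < x ^ 2 ↔ g x < 0 := by
    intro x
    have hπ : 0 < π := Real.pi_pos
    set A : ℝ := a * (Real.sqrt (2 * π * μr))⁻¹ with hAdef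
    set Bc : ℝ := b * (Real.sqrt (2 * π * vr))⁻¹ with hBcdef
    have hsμ : 0 < Real.sqrt (2 * π * μr) := Real.sqrt_pos.mpr (by positivity)
    have hsv : 0 < Real.sqrt (2 * π * vr) := Real.sqrt_pos.mpr (by positivity)
    have hA : 0 < A := mul_pos ha (inv_pos.mpr hsμ)
    have hBc : 0 < Bc := mul_pos hb' (inv_pos.mpr hsv)
    have hargpos : 0 < β * (1 - p) * Real.sqrt (σr ^ 2 / μr + 1) / ((1 - β) * p) := by
      have : 0 < Real.sqrt (σr ^ 2 / μr + 1) := Real.sqrt_pos.mpr (by positivity)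
      positivity
    set L : ℝ := Real.log (β * (1 - p) * Real.sqrt (σr ^ 2 / μr + 1) / ((1 - β) * p)) with hLdef
    set c : ℝ := σr ^ 2 / (2 * μr * vr) with hcdef
    have hc : 0 < c := by positivity
    -- τ' = L / c
    have hτ'2 : τ' = 2 * (vr / (σr ^ 2 / μr)) * L := by
      rw [hτ', hLdef, hvr']
    have hcτ : c * τ' = L := by
      rw [hτ'2, hcdef]
      field_simp
    have h1 : τ' < x ^ 2 ↔ L < x ^ 2 * c := by
      rw [← hcτ]
      constructor
      · intro h
        have := (mul_lt_mul_iff_right₀ hc).mpr h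
        linarith [this]
      · intro h
        by_contra hcon
        push_neg at hcon
        have := mul_le_mul_of_nonneg_left hcon hc.le
        linarith
    -- g x expressed with A, Bc
    have hgx : g x = A * Real.exp (-x ^ 2 / (2 * μr)) - Bc * Real.exp (-x ^ 2 / (2 * vr)) := by
      simp only [hgdef, hAdef, hBcdef, hf₀def, hf₁def, gaussianPDFReal, hμrdef, hvrdef, sub_zero]
      ring
    -- log A = L + log Bc
    have hsqrt : Real.sqrt (2 * π * vr) = Real.sqrt (σr ^ 2 / μr + 1) * Real.sqrt (2 * π * μr) := by
      rw [← Real.sqrt_mul (by positivity)]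
      congr 1
      rw [hvr']
      field_simp
    have hABc : A = (β * (1 - p) * Real.sqrt (σr ^ 2 / μr + 1) / ((1 - β) * p)) * Bc := by
      rw [hAdef, hBcdef, hadef, hbdef, hsqrt]
      have h1' : Real.sqrt (σr ^ 2 / μr + 1) ≠ 0 := by
        have : 0 < Real.sqrt (σr ^ 2 / μr + 1) := Real.sqrt_pos.mpr (by positivity)
        exact this.ne'
      have hβne : (1 - β) ≠ 0 := (by linarith : (0:ℝ) < 1 - β).ne'
      have hpne : p ≠ 0 := hp.ne'
      field_simp
    have hlogA : Real.log A = L + Real.log Bc := by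
      rw [hABc, Real.log_mul hargpos.ne' hBc.ne', hLdef]
    -- g x < 0 iff log-inequality
    have h2 : g x < 0 ↔ Real.log A + (-x ^ 2 / (2 * μr)) < Real.log Bc + (-x ^ 2 / (2 * vr)) := by
      rw [hgx, sub_neg]
      rw [show A * Real.exp (-x ^ 2 / (2 * μr)) = Real.exp (Real.log A + (-x ^ 2 / (2 * μr)))
          by rw [Real.exp_add, Real.exp_log hA],
        show Bc * Real.exp (-x ^ 2 / (2 * vr)) = Real.exp (Real.log Bc + (-x ^ 2 / (2 * vr)))
          by rw [Real.exp_add, Real.exp_log hBc]]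
      exact Real.exp_lt_exp
    have hxx : x ^ 2 / (2 * μr) - x ^ 2 / (2 * vr) = x ^ 2 * c := by
      rw [hcdef, hvr']
      field_simp
      ring
    have e0 : -x ^ 2 / (2 * μr) = -(x ^ 2 / (2 * μr)) := by ring
    have e0' : -x ^ 2 / (2 * vr) = -(x ^ 2 / (2 * vr)) := by ring
    rw [h1, h2, hlogA]
    constructor <;> intro h <;> linarith [hxx, e0, e0']
  -- the pointwise comparison gives the integral comparison
  have hgSle : ∫ x in Sstar, g x ≤ ∫ x in S, g x := by
    calc ∫ x in Sstar, g x
        = (∫ x in Sstar ∩ S, g x) + ∫ x in Sstar \ S, g x :=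
          (integral_inter_add_diff hSm hgi.integrableOn).symm
      _ ≤ ∫ x in Sstar ∩ S, g x := by
          have : ∫ x in Sstar \ S, g x ≤ 0 :=
            setIntegral_nonpos (hSstarm.diff hSm)
              (fun x hx => ((hiff x).mp hx.1).le)
          linarith
      _ = ∫ x in S ∩ Sstar, g x := by rw [Set.inter_comm]
      _ ≤ (∫ x in S ∩ Sstar, g x) + ∫ x in S \ Sstar, g x := by
          have : 0 ≤ ∫ x in S \ Sstar, g x :=
            setIntegral_nonneg (hSm.diff hSstarm)
              (fun x hx => by
                by_contra hcon
                push_neg at hcon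
                exact hx.2 ((hiff x).mpr hcon))
          linarith
      _ = ∫ x in S, g x := integral_inter_add_diff hSstarm hgi.integrableOn
  rw [hsplit Sstar hSstarm, hsplit S hSm, hadef, hbdef] at hgSle
  rw [hcompl Sstar hSstarm, hcompl S hSm]
  linarith [hgSle]
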